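/- Let Is_γ(z,t) be a polynomial in z of degree 6γ−2 (with coefficients polynomials in t) and let P_γ(z,t,X) = (1 − zX²)^{6γ−2}(−1 + X − zX²) − (1 − zX²)^{6γ−2} · Is_γ(zX²/(1 − zX²), t). Then P_γ(z,t,X) is a polynomial in X of degree 12γ−2, and any formal power series H(z,t) satisfying H − zH² − Is_γ(zH²/(1 − zH²), t) = 1 satisfies P_γ(z,t,H) = 0. -/

import Mathlib

open Polynomial

lemma aux_deg1 {F : Type*} [Field F] (z : F) (hz : z ≠ 0) :
    (1 - C z * X ^ 2 : F[X]).natDegree = 2 := by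
  compute_degree!

lemma aux_deg2 {F : Type*} [Field F] (z : F) (hz : z ≠ 0) :
    (-1 + X - C z * X ^ 2 : F[X]).natDegree = 2 := by
  compute_degree!
  simp only [coeff_one, Polynomial.coeff_one]
  norm_num [hz]

lemma aux_ne1 {F : Type*} [Field F] (z : F) (hz : z ≠ 0) :
    (1 - C z * X ^ 2 : F[X]) ≠ 0 := by
  intro h
  have := aux_deg1 z hz
  rw [h] at this
  simp at this

lemma aux_ne2 {F : Type*} [Field F] (z : F) (hz : z ≠ 0) :
    (-1 + X - C z * X ^ 2 : F[X]) ≠ 0 := by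
  intro h
  have := aux_deg2 z hz
  rw [h] at this
  simp at this

/-- Let `Is` be the polynomial `Is_γ(·,t)` (a polynomial of degree `6γ-2`;
its coefficients are polynomials in `t`, here absorbed into the field `F`),
and let
`P_γ(z,t,X) = (1-zX²)^{6γ-2}(-1+X-zX²) - (1-zX²)^{6γ-2}·Is(zX²/(1-zX²))`,
written as a genuine polynomial in `X`.  Then `P_γ` has degree `12γ-2` in `X`,
and any power series `H` satisfying
`H - zH² - Is(zH²/(1-zH²)) = 1` satisfies `P_γ(z,t,H) = 0`. -/
theorem P_gamma_poly_and_annihilates {F : Type*} [Field F]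
    (γ : ℕ) (hγ : 1 ≤ γ) (z : F) (hz : z ≠ 0)
    (Is : Polynomial F) (hdeg : Is.natDegree = 6 * γ - 2) :
    let P : Polynomial F :=
      (1 - C z * X ^ 2) ^ (6 * γ - 2) * (-1 + X - C z * X ^ 2) -
        ∑ k ∈ Finset.range (6 * γ - 1),
          C (Is.coeff k) * (C z * X ^ 2) ^ k *
            (1 - C z * X ^ 2) ^ (6 * γ - 2 - k)
    P.natDegree = 12 * γ - 2 ∧
      ∀ H : F, 1 - z * H ^ 2 ≠ 0 →
        H - z * H ^ 2 - Is.eval (z * H ^ 2 / (1 - z * H ^ 2)) = 1 →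
        P.eval H = 0 := by
  intro P
  constructor
  · -- degree computation
    have h1 : ((1 - C z * X ^ 2 : F[X]) ^ (6 * γ - 2) *
        (-1 + X - C z * X ^ 2)).natDegree = 12 * γ - 2 := by
      rw [natDegree_mul (pow_ne_zero _ (aux_ne1 z hz)) (aux_ne2 z hz),
        natDegree_pow, aux_deg1 z hz, aux_deg2 z hz]
      omega
    have h2 : (∑ k ∈ Finset.range (6 * γ - 1),
        C (Is.coeff k) * (C z * X ^ 2) ^ k *
          (1 - C z * X ^ 2) ^ (6 * γ - 2 - k)).natDegree < 12 * γ - 2 := by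
      have hle : (∑ k ∈ Finset.range (6 * γ - 1),
          C (Is.coeff k) * (C z * X ^ 2) ^ k *
            (1 - C z * X ^ 2) ^ (6 * γ - 2 - k)).natDegree ≤ 12 * γ - 4 := by
        refine Polynomial.natDegree_sum_le_of_forall_le _ _ fun k hk => ?_
        simp only [Finset.mem_range] at hk
        calc (C (Is.coeff k) * (C z * X ^ 2) ^ k *
                (1 - C z * X ^ 2) ^ (6 * γ - 2 - k)).natDegree
            ≤ (C (Is.coeff k) * (C z * X ^ 2) ^ k).natDegree
              + ((1 - C z * X ^ 2 : F[X]) ^ (6 * γ - 2 - k)).natDegree :=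
              natDegree_mul_le
          _ ≤ ((C (Is.coeff k)).natDegree + ((C z * X ^ 2 : F[X]) ^ k).natDegree)
              + (6 * γ - 2 - k) * 2 := by
              gcongr
              · exact natDegree_mul_le
              · calc ((1 - C z * X ^ 2 : F[X]) ^ (6 * γ - 2 - k)).natDegree
                    ≤ (6 * γ - 2 - k) * (1 - C z * X ^ 2 : F[X]).natDegree :=
                      natDegree_pow_le
                  _ = (6 * γ - 2 - k) * 2 := by rw [aux_deg1 z hz]
          _ ≤ (0 + k * 2) + (6 * γ - 2 - k) * 2 := by
              gcongr
              · exact le_of_eq (natDegree_C _)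
              · calc ((C z * X ^ 2 : F[X]) ^ k).natDegree
                    ≤ k * (C z * X ^ 2 : F[X]).natDegree := natDegree_pow_le
                  _ ≤ k * 2 := by
                      gcongr
                      calc (C z * X ^ 2 : F[X]).natDegree
                          ≤ (C z).natDegree + (X ^ 2 : F[X]).natDegree :=
                            natDegree_mul_le
                        _ ≤ 2 := by simp
          _ ≤ 12 * γ - 4 := by omega
      omega
    have := Polynomial.natDegree_sub_eq_left_of_natDegree_lt (h1 ▸ h2)
    rw [this, h1]
  · -- annihilation
    intro H hne heq
    set w : F := z * H ^ 2 / (1 - z * H ^ 2) with hw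
    have hev : Is.eval w = ∑ k ∈ Finset.range (6 * γ - 1),
        Is.coeff k * w ^ k :=
      Polynomial.eval_eq_sum_range' (by omega) w
    have hterm : ∀ k ∈ Finset.range (6 * γ - 1),
        Is.coeff k * (z * H ^ 2) ^ k * (1 - z * H ^ 2) ^ (6 * γ - 2 - k)
          = Is.coeff k * w ^ k * (1 - z * H ^ 2) ^ (6 * γ - 2) := by
      intro k hk
      simp only [Finset.mem_range] at hk
      have hkle : k ≤ 6 * γ - 2 := by omega
      rw [hw, div_pow, mul_assoc, mul_assoc]
      congr 1
      rw [div_mul_eq_mul_div, eq_div_iff (pow_ne_zero _ hne),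
        mul_assoc, ← pow_add]
      congr 2
      omega
    have : P.eval H = (1 - z * H ^ 2) ^ (6 * γ - 2) * (-1 + H - z * H ^ 2)
        - ∑ k ∈ Finset.range (6 * γ - 1),
            Is.coeff k * (z * H ^ 2) ^ k * (1 - z * H ^ 2) ^ (6 * γ - 2 - k) := by
      simp [P, eval_finset_sum]
    rw [this, Finset.sum_congr rfl hterm, ← Finset.sum_mul, ← hev]
    linear_combination (1 - z * H ^ 2) ^ (6 * γ - 2) * heq
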